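/- Let d ≥ 1, let Φ : ℂ^{d×d} → ℂ^{d×d} be a 2-positive linear map, and let G = {g₁, …, g_d} be any orthonormal basis of ℂ^d. Then tr(Φ) ≤ d·tr(T_G), where T_G is the transition matrix of Φ with respect to G. -/

import Mathlib

open Matrix
open scoped ComplexOrder

/-- A linear map on `d × d` complex matrices is *positive* if it sends positive semidefinite
matrices to positive semidefinite matrices. -/
def IsPosMap {d : ℕ} (Φ : Matrix (Fin d) (Fin d) ℂ → Matrix (Fin d) (Fin d) ℂ) : Prop :=
  ∀ A : Matrix (Fin d) (Fin d) ℂ, A.PosSemidef → (Φ A).PosSemidef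

/-- A map on `d × d` complex matrices is *2-positive* if it sends every positive semidefinite
`2d × 2d` block matrix `[[A, B], [C, D]]` to a positive semidefinite block matrix
`[[Φ A, Φ B], [Φ C, Φ D]]`. -/
def IsTwoPos {d : ℕ} (Φ : Matrix (Fin d) (Fin d) ℂ → Matrix (Fin d) (Fin d) ℂ) : Prop :=
  ∀ A B C D : Matrix (Fin d) (Fin d) ℂ,
    (Matrix.fromBlocks A B C D).PosSemidef →
    (Matrix.fromBlocks (Φ A) (Φ B) (Φ C) (Φ D)).PosSemidef

/-- A map on matrices is *trace-preserving* if `tr (Φ X) = tr X` for all `X`. -/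
def IsTracePreserving {d : ℕ} (Φ : Matrix (Fin d) (Fin d) ℂ → Matrix (Fin d) (Fin d) ℂ) : Prop :=
  ∀ X : Matrix (Fin d) (Fin d) ℂ, (Φ X).trace = X.trace

/-- The transition matrix `T_G` of a map `Φ` with respect to a family `g` of vectors:
`(T_G)_{jk} = ⟨g j, Φ(|g k⟩⟨g k|) (g j)⟩`. -/
noncomputable def transMat {d : ℕ} (Φ : Matrix (Fin d) (Fin d) ℂ → Matrix (Fin d) (Fin d) ℂ)
    (g : Fin d → (Fin d → ℂ)) : Matrix (Fin d) (Fin d) ℂ :=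
  Matrix.of fun j k =>
    star (g j) ⬝ᵥ (Φ (Matrix.vecMulVec (g k) (star (g k)))).mulVec (g j)

/-- An outer product `v v^*` is positive semidefinite. -/
lemma outer_posSemidef {n : Type*} [Fintype n] (v : n → ℂ) :
    (Matrix.vecMulVec v (star v)).PosSemidef := by
  rw [Matrix.posSemidef_iff_dotProduct_mulVec]
  constructor
  · ext i j
    simp [Matrix.conjTranspose_apply, Matrix.vecMulVec_apply, mul_comm]
  · intro x
    have h1 : star x ⬝ᵥ (Matrix.vecMulVec v (star v)).mulVec x
        = star (star v ⬝ᵥ x) * (star v ⬝ᵥ x) := by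
      simp only [dotProduct, Matrix.mulVec, Matrix.vecMulVec_apply, star_sum,
        Finset.mul_sum, Finset.sum_mul, Pi.star_apply, star_mul', starRingEnd_apply, star_star]
      rw [Finset.sum_comm]
      congr 1; ext i; congr 1; ext j; ring
    rw [h1]
    exact star_mul_self_nonneg _

/-- Trace of an endomorphism of matrices, computed in the "rotated" basis coming from an
orthonormal family `g`. -/
lemma trace_eq_sum_of_on {d : ℕ} (Φ : Module.End ℂ (Matrix (Fin d) (Fin d) ℂ))
    (g : Fin d → (Fin d → ℂ))
    (hON : ∀ i j, star (g i) ⬝ᵥ g j = if i = j then (1 : ℂ) else 0) :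
    LinearMap.trace ℂ (Matrix (Fin d) (Fin d) ℂ) Φ =
      ∑ j : Fin d, ∑ k : Fin d,
        star (g j) ⬝ᵥ (Φ (Matrix.vecMulVec (g j) (star (g k)))).mulVec (g k) := by
  classical
  set U : Matrix (Fin d) (Fin d) ℂ := Matrix.of (fun i j => g j i) with hU
  have hUU : Uᴴ * U = 1 := by
    ext i j
    simpa [hU, Matrix.mul_apply, Matrix.conjTranspose_apply, Matrix.one_apply, dotProduct,
      mul_comm] using hON i j
  have assoc : ∀ (V W : Matrix (Fin d) (Fin d) ℂ) (M : Matrix (Fin d) (Fin d) ℂ),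
      V * (W * M * V) * W = (V * W) * M * (V * W) := fun V W M => by noncomm_ring
  have hUU' : U * Uᴴ = 1 := mul_eq_one_comm.mp hUU
  let e : Matrix (Fin d) (Fin d) ℂ ≃ₗ[ℂ] Matrix (Fin d) (Fin d) ℂ :=
    { toFun := fun M => U * M * Uᴴ
      map_add' := fun M N => by noncomm_ring
      map_smul' := fun c M => by simp [Matrix.mul_smul, Matrix.smul_mul]
      invFun := fun M => Uᴴ * M * U
      left_inv := fun M => by simp only; rw [assoc, hUU, Matrix.one_mul, Matrix.mul_one]
      right_inv := fun M => by simp only; rw [assoc, hUU', Matrix.one_mul, Matrix.mul_one] }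
  let b := (Matrix.stdBasis ℂ (Fin d) (Fin d)).map e
  have hrepr : ∀ (M : Matrix (Fin d) (Fin d) ℂ) (j k : Fin d),
      b.repr M (j, k) = star (g j) ⬝ᵥ M.mulVec (g k) := by
    intro M j k
    have h1 : b.repr M (j, k) = (Matrix.stdBasis ℂ (Fin d) (Fin d)).repr (Uᴴ * M * U) (j, k) := by
      simp [b, Module.Basis.map_repr, e, LinearEquiv.trans_apply]
    have h2 : (Matrix.stdBasis ℂ (Fin d) (Fin d)).repr (Uᴴ * M * U) (j, k)
        = (Uᴴ * M * U) j k := by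
      simp [Matrix.stdBasis, Matrix.ofLinearEquiv]
    rw [h1, h2]
    simp only [Matrix.mul_apply, Matrix.conjTranspose_apply, dotProduct, Matrix.mulVec,
      Matrix.of_apply, Finset.mul_sum, Finset.sum_mul, Pi.star_apply, hU]
    rw [Finset.sum_comm]
    congr 1; ext a; congr 1; ext c; ring
  have hb : ∀ j k : Fin d, b (j, k) = Matrix.vecMulVec (g j) (star (g k)) := by
    intro j k
    have : b (j, k) = U * Matrix.single j k 1 * Uᴴ := by
      simp [b, Module.Basis.map_apply, Matrix.stdBasis_eq_single, e]
    rw [this]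
    ext a c
    simp [hU, Matrix.mul_apply, Matrix.single, Matrix.vecMulVec_apply,
      Matrix.conjTranspose_apply, Finset.sum_ite_eq, ite_and]
  rw [LinearMap.trace_eq_matrix_trace ℂ b Φ, Matrix.trace]
  rw [show (Finset.univ : Finset (Fin d × Fin d)) = Finset.univ ×ˢ Finset.univ by simp]
  rw [Finset.sum_product]
  refine Finset.sum_congr rfl fun j _ => Finset.sum_congr rfl fun k _ => ?_
  rw [Matrix.diag_apply, LinearMap.toMatrix_apply, hb, hrepr]

/-- For every 2-positive map Φ and every orthonormal basis G of ℂ^d,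
tr(Φ) ≤ d·tr(T_G). -/
theorem trace_le_d_mul_trace_transMat (d : ℕ) (hd : 1 ≤ d)
    (Φ : Module.End ℂ (Matrix (Fin d) (Fin d) ℂ)) (h2 : IsTwoPos ⇑Φ)
    (g : Fin d → (Fin d → ℂ))
    (hON : ∀ i j, star (g i) ⬝ᵥ g j = if i = j then (1 : ℂ) else 0) :
    (LinearMap.trace ℂ (Matrix (Fin d) (Fin d) ℂ) Φ).re ≤
      d * (transMat ⇑Φ g).trace.re := by
  classical
  set x : Fin d → Fin d → ℝ := fun j k =>
    (star (g j) ⬝ᵥ (Φ (Matrix.vecMulVec (g j) (star (g k)))).mulVec (g k)).re with hx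
  set t : Fin d → ℝ := fun j =>
    (star (g j) ⬝ᵥ (Φ (Matrix.vecMulVec (g j) (star (g j)))).mulVec (g j)).re with ht
  -- the key inequality from 2-positivity
  have key : ∀ j k : Fin d, x j k + x k j ≤ t j + t k := by
    intro j k
    have hblk : (Matrix.fromBlocks
        (Matrix.vecMulVec (g j) (star (g j))) (Matrix.vecMulVec (g j) (star (g k)))
        (Matrix.vecMulVec (g k) (star (g j))) (Matrix.vecMulVec (g k) (star (g k)))).PosSemidef := by
      have heq : Matrix.fromBlocks
          (Matrix.vecMulVec (g j) (star (g j))) (Matrix.vecMulVec (g j) (star (g k)))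
          (Matrix.vecMulVec (g k) (star (g j))) (Matrix.vecMulVec (g k) (star (g k)))
          = Matrix.vecMulVec (Sum.elim (g j) (g k)) (star (Sum.elim (g j) (g k))) := by
        ext i i'
        cases i <;> cases i' <;> simp [Matrix.vecMulVec_apply, Matrix.fromBlocks]
      rw [heq]
      exact outer_posSemidef _
    have hP := h2 _ _ _ _ hblk
    have hq := hP.dotProduct_mulVec_nonneg (Sum.elim (g j) (-(g k)))
    have hq' : (0 : ℂ) ≤
        star (g j) ⬝ᵥ (Φ (Matrix.vecMulVec (g j) (star (g j)))).mulVec (g j)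
        - star (g j) ⬝ᵥ (Φ (Matrix.vecMulVec (g j) (star (g k)))).mulVec (g k)
        - star (g k) ⬝ᵥ (Φ (Matrix.vecMulVec (g k) (star (g j)))).mulVec (g j)
        + star (g k) ⬝ᵥ (Φ (Matrix.vecMulVec (g k) (star (g k)))).mulVec (g k) := by
      simpa [Function.star_sumElim, Matrix.fromBlocks_mulVec, sumElim_dotProduct_sumElim,
        dotProduct_add, Matrix.mulVec_neg, dotProduct_neg, neg_dotProduct,
        sub_eq_add_neg, add_comm, add_left_comm, add_assoc] using hq
    have := (Complex.le_def.mp hq').1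
    simp only [Complex.zero_re, Complex.add_re, Complex.sub_re] at this
    simp only [hx, ht]
    linarith
  -- rewrite both sides as real double sums
  rw [trace_eq_sum_of_on Φ g hON]
  rw [Complex.re_sum]
  simp only [Complex.re_sum]
  have htr : (transMat ⇑Φ g).trace.re = ∑ j : Fin d, t j := by
    rw [Matrix.trace, Complex.re_sum]
    rfl
  rw [htr]
  -- conclude by summing the key inequality
  have hsum : (∑ j : Fin d, ∑ k : Fin d, (x j k + x k j))
      ≤ ∑ j : Fin d, ∑ k : Fin d, (t j + t k) := by
    refine Finset.sum_le_sum fun j _ => Finset.sum_le_sum fun k _ => key j k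
  have hswap : (∑ j : Fin d, ∑ k : Fin d, x k j) = ∑ j : Fin d, ∑ k : Fin d, x j k :=
    Finset.sum_comm
  have h1 : (∑ j : Fin d, ∑ k : Fin d, (x j k + x k j))
      = (∑ j : Fin d, ∑ k : Fin d, x j k) + (∑ j : Fin d, ∑ k : Fin d, x k j) := by
    simp [Finset.sum_add_distrib]
  have h2' : (∑ j : Fin d, ∑ k : Fin d, (t j + t k))
      = (d : ℝ) * (∑ j : Fin d, t j) + (d : ℝ) * (∑ j : Fin d, t j) := by
    simp only [Finset.sum_add_distrib, Finset.sum_const, Finset.card_univ, Fintype.card_fin,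
      nsmul_eq_mul, ← Finset.sum_mul, Finset.mul_sum]
    try ring
  show (∑ j : Fin d, ∑ k : Fin d, x j k) ≤ (d : ℝ) * ∑ j : Fin d, t j
  rw [h1, hswap, h2'] at hsum
  linarith
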